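/- Let V be a real vector space, Ω ⊆ V a convex set, and x ∈ Ω. Then the refinement set Ref(x) = {s ∈ Ω | s ≻ x} is a face of Ω; that is, Ref(x) is convex, and whenever s' ∈ Ref(x), s ∈ Ω and s ≻ s', also s ∈ Ref(x). -/

import Mathlib

/-- `s` refines `x` (written `s ≻ x`) relative to the convex set `Ω`:
there exist `p ∈ (0,1]` and `t ∈ Ω` with `x = p • s + (1-p) • t`. -/
def Refines {V : Type*} [AddCommGroup V] [Module ℝ V] (Ω : Set V) (s x : V) : Prop :=
  ∃ p : ℝ, 0 < p ∧ p ≤ 1 ∧ ∃ t ∈ Ω, x = p • s + (1 - p) • t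

/-- The refinement set of `x` in `Ω`: all states of `Ω` refining `x`. -/
def RefSet {V : Type*} [AddCommGroup V] [Module ℝ V] (Ω : Set V) (x : V) : Set V :=
  {s ∈ Ω | Refines Ω s x}

/-- `F` is a face of `Ω`: a convex subset of `Ω` closed under refinement. -/
def IsFaceOf {V : Type*} [AddCommGroup V] [Module ℝ V] (F Ω : Set V) : Prop :=
  F ⊆ Ω ∧ Convex ℝ F ∧ ∀ s' ∈ F, ∀ s ∈ Ω, Refines Ω s s' → s ∈ F

/-- If `x = p • s + (1-p) • t` with `s, t ∈ Ω`, then the coefficient can be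
decreased to any `p' ∈ (0, p]`. -/
lemma refines_downgrade {V : Type*} [AddCommGroup V] [Module ℝ V] {Ω : Set V}
    (hΩ : Convex ℝ Ω) {s x : V} (hs : s ∈ Ω) {p p' : ℝ} (hp' : 0 < p') (hle : p' ≤ p)
    (hp1 : p ≤ 1) {t : V} (ht : t ∈ Ω) (hx : x = p • s + (1 - p) • t) :
    ∃ t' ∈ Ω, x = p' • s + (1 - p') • t' := by
  rcases eq_or_lt_of_le hle with h | h
  · exact ⟨t, ht, h ▸ hx⟩
  · have h1 : (0:ℝ) < 1 - p' := by linarith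
    refine ⟨((p - p') / (1 - p')) • s + ((1 - p) / (1 - p')) • t,
      hΩ hs ht (div_nonneg (by linarith) h1.le) (div_nonneg (by linarith) h1.le) (by field_simp; ring), ?_⟩
    rw [hx]
    match_scalars <;> field_simp <;> ring

/-- the refinement set of any `x ∈ Ω` is a face of `Ω`. -/
theorem refSet_isFaceOf {V : Type*} [AddCommGroup V] [Module ℝ V]
    (Ω : Set V) (hΩ : Convex ℝ Ω) (x : V) (hx : x ∈ Ω) :
    IsFaceOf (RefSet Ω x) Ω := by
  refine ⟨fun s hs => hs.1, ?_, ?_⟩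
  · rintro s₁ ⟨hs₁, p₁, hp₁, hp₁', t₁, ht₁, hx₁⟩ s₂ ⟨hs₂, p₂, hp₂, hp₂', t₂, ht₂, hx₂⟩
      a b ha hb hab
    refine ⟨hΩ hs₁ hs₂ ha hb hab, ?_⟩
    set p := min p₁ p₂ with hpdef
    obtain ⟨u₁, hu₁, hxu₁⟩ := refines_downgrade hΩ hs₁ (lt_min hp₁ hp₂)
      (min_le_left p₁ p₂) hp₁' ht₁ hx₁
    obtain ⟨u₂, hu₂, hxu₂⟩ := refines_downgrade hΩ hs₂ (lt_min hp₁ hp₂)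
      (min_le_right p₁ p₂) hp₂' ht₂ hx₂
    refine ⟨p, lt_min hp₁ hp₂, le_trans (min_le_left p₁ p₂) hp₁',
      a • u₁ + b • u₂, hΩ hu₁ hu₂ ha hb hab, ?_⟩
    have : x = a • x + b • x := by
      rw [← add_smul, hab, one_smul]
    rw [this]
    nth_rewrite 1 [hxu₁]
    nth_rewrite 1 [hxu₂]
    match_scalars <;> linarith
  · rintro s' ⟨hs'Ω, p, hp, hp1, t, ht, hx⟩ s hs ⟨q, hq, hq1, u, hu, hs'⟩
    refine ⟨hs, ?_⟩
    have hpq : p * q ≤ 1 := mul_le_one₀ hp1 hq.le hq1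
    rcases lt_or_eq_of_le hpq with h | h
    · have h1 : (0:ℝ) < 1 - p * q := by linarith
      refine ⟨p * q, by positivity, hpq,
        ((p * (1 - q)) / (1 - p * q)) • u + ((1 - p) / (1 - p * q)) • t,
        hΩ hu ht (div_nonneg (by nlinarith) h1.le) (div_nonneg (by linarith) h1.le) (by field_simp; ring), ?_⟩
      rw [hx, hs']
      match_scalars <;> field_simp <;> ring
    · have hpe : p = 1 := by nlinarith
      have hqe : q = 1 := by nlinarith
      refine ⟨1, one_pos, le_refl 1, t, ht, ?_⟩
      rw [hx, hs', hpe, hqe]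
      simp
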